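/- Under the uniform measure on separable permutations of [n], conditionally on the first indecomposable block having length less than n, the probability that it has length j converges as n → ∞ to 2(3 − 2√2) for j = 1 and s_j (3 − 2√2)^j for j ≥ 2. -/

import Mathlib

open Equiv Finset Filter Topology

/-- Direct sum of permutations: `(σ⊕τ)(i)=σ(i)` for `i<k`, `(σ⊕τ)(k+i)=k+τ(i)`. -/
def directSum {k l : ℕ} (σ : Equiv.Perm (Fin k)) (τ : Equiv.Perm (Fin l)) :
    Equiv.Perm (Fin (k + l)) :=
  finSumFinEquiv.symm.trans ((Equiv.sumCongr σ τ).trans finSumFinEquiv)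

/-- Skew sum of permutations: `(σ⊖τ)(i)=σ(i)+l` for `i<k`, `(σ⊖τ)(k+i)=τ(i)`. -/
def skewSum {k l : ℕ} (σ : Equiv.Perm (Fin k)) (τ : Equiv.Perm (Fin l)) :
    Equiv.Perm (Fin (k + l)) :=
  finSumFinEquiv.symm.trans ((Equiv.sumCongr σ τ).trans
    ((Equiv.sumComm (Fin k) (Fin l)).trans (finSumFinEquiv.trans (finCongr (Nat.add_comm l k)))))

/-- A permutation is separable if it is the singleton or a direct or skew sum of
two separable permutations. -/
inductive Separable : {n : ℕ} → Equiv.Perm (Fin n) → Prop where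
  | single : Separable (Equiv.refl (Fin 1))
  | dsum {k l : ℕ} {σ : Equiv.Perm (Fin k)} {τ : Equiv.Perm (Fin l)} :
      Separable σ → Separable τ → Separable (directSum σ τ)
  | ssum {k l : ℕ} {σ : Equiv.Perm (Fin k)} {τ : Equiv.Perm (Fin l)} :
      Separable σ → Separable τ → Separable (skewSum σ τ)

/-- `numSep n` = number of separable permutations of `[n]` (denoted `s_n`). -/
noncomputable def numSep (n : ℕ) : ℕ := Nat.card {σ : Equiv.Perm (Fin n) // Separable σ}

/-- The length `|B₁^{+,n}|(σ)` of the first indecomposable block of `σ`: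
the least `j ≥ 1` with `σ([j]) = [j]`. -/
noncomputable def firstBlockLen {n : ℕ} (σ : Equiv.Perm (Fin n)) : ℕ :=
  sInf {j : ℕ | 0 < j ∧ ∀ i : Fin n, (i : ℕ) < j → ((σ i : ℕ) < j)}

/-! ### Part I: structure -/

lemma directSum_castAdd {k l : ℕ} (σ : Perm (Fin k)) (τ : Perm (Fin l)) (i : Fin k) :
    directSum σ τ (Fin.castAdd l i) = Fin.castAdd l (σ i) := by simp [directSum]

lemma directSum_natAdd {k l : ℕ} (σ : Perm (Fin k)) (τ : Perm (Fin l)) (i : Fin l) :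
    directSum σ τ (Fin.natAdd k i) = Fin.natAdd k (τ i) := by simp [directSum]

lemma skewSum_castAdd {k l : ℕ} (σ : Perm (Fin k)) (τ : Perm (Fin l)) (i : Fin k) :
    ((skewSum σ τ (Fin.castAdd l i) : ℕ)) = σ i + l := by simp [skewSum]

lemma skewSum_natAdd {k l : ℕ} (σ : Perm (Fin k)) (τ : Perm (Fin l)) (i : Fin l) :
    ((skewSum σ τ (Fin.natAdd k i) : ℕ)) = τ i := by simp [skewSum]

lemma directSum_apply_lt {k l : ℕ} (σ : Perm (Fin k)) (τ : Perm (Fin l)) (i : Fin (k+l))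
    (hi : (i : ℕ) < k) : ((directSum σ τ i : ℕ)) = σ ⟨i, hi⟩ := by
  have h1 : directSum σ τ i = directSum σ τ (Fin.castAdd l ⟨(i : ℕ), hi⟩) :=
    congrArg _ (Fin.ext rfl)
  rw [h1, directSum_castAdd]; simp

lemma directSum_apply_ge {k l : ℕ} (σ : Perm (Fin k)) (τ : Perm (Fin l)) (i : Fin (k+l))
    (hi : k ≤ (i : ℕ)) : ((directSum σ τ i : ℕ)) = k + τ ⟨i - k, by omega⟩ := by
  have h1 : directSum σ τ i = directSum σ τ (Fin.natAdd k ⟨(i : ℕ) - k, by omega⟩) :=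
    congrArg _ (Fin.ext (by simp [Fin.natAdd]; omega))
  rw [h1, directSum_natAdd]; simp

lemma skewSum_apply_lt {k l : ℕ} (σ : Perm (Fin k)) (τ : Perm (Fin l)) (i : Fin (k+l))
    (hi : (i : ℕ) < k) : ((skewSum σ τ i : ℕ)) = σ ⟨i, hi⟩ + l := by
  have h1 : skewSum σ τ i = skewSum σ τ (Fin.castAdd l ⟨(i : ℕ), hi⟩) :=
    congrArg _ (Fin.ext rfl)
  rw [h1, skewSum_castAdd]

lemma skewSum_apply_ge {k l : ℕ} (σ : Perm (Fin k)) (τ : Perm (Fin l)) (i : Fin (k+l))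
    (hi : k ≤ (i : ℕ)) : ((skewSum σ τ i : ℕ)) = τ ⟨i - k, by omega⟩ := by
  have h1 : skewSum σ τ i = skewSum σ τ (Fin.natAdd k ⟨(i : ℕ) - k, by omega⟩) :=
    congrArg _ (Fin.ext (by simp [Fin.natAdd]; omega))
  rw [h1, skewSum_natAdd]

lemma Separable.pos {n : ℕ} {σ : Perm (Fin n)} (h : Separable σ) : 0 < n := by
  induction h with
  | single => norm_num
  | dsum h1 h2 ih1 ih2 => omega
  | ssum h1 h2 ih1 ih2 => omega

lemma Separable.congr {n m : ℕ} {σ : Perm (Fin n)} (h : Separable σ) (e : n = m) :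
    Separable ((finCongr e).permCongr σ) := by
  subst e; convert h using 1; ext x; simp

/-- `σ` maps `[0,k)` into itself. -/
def Splits {n : ℕ} (σ : Perm (Fin n)) (k : ℕ) : Prop :=
  ∀ i : Fin n, (i : ℕ) < k → ((σ i : ℕ) < k)

lemma Splits.ge {n : ℕ} {σ : Perm (Fin n)} {k : ℕ} (h : Splits σ k) (i : Fin n)
    (hi : k ≤ (i : ℕ)) : k ≤ (σ i : ℕ) := by
  by_contra hc
  push_neg at hc
  set A : Finset (Fin n) := univ.filter (fun x => (x : ℕ) < k) with hA
  have hsub : A.image σ ⊆ A := by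
    intro x hx
    simp only [hA, Finset.mem_image, Finset.mem_filter, Finset.mem_univ, true_and] at hx ⊢
    obtain ⟨a, ha, rfl⟩ := hx
    exact h a ha
  have hcard : A.card ≤ (A.image σ).card := by
    rw [Finset.card_image_of_injective _ σ.injective]
  have heq : A.image σ = A := Finset.eq_of_subset_of_card_le hsub hcard
  have : σ i ∈ A := by
    simp only [hA, Finset.mem_filter, Finset.mem_univ, true_and]; exact hc
  rw [← heq] at this
  simp only [Finset.mem_image] at this
  obtain ⟨a, ha, hax⟩ := this
  have : a = i := σ.injective hax
  subst this
  simp only [hA, Finset.mem_filter, Finset.mem_univ, true_and] at ha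
  omega

/-- left component of a permutation splitting at `k`. -/
noncomputable def leftPerm {n : ℕ} (σ : Perm (Fin n)) (k : ℕ) (hk : k ≤ n) (h : Splits σ k) :
    Perm (Fin k) :=
  Equiv.ofBijective (fun i => (⟨(σ (Fin.castLE hk i) : ℕ), h _ (by simpa using i.isLt)⟩ : Fin k))
    (Finite.injective_iff_bijective.mp (by
      intro a b hab
      simp only [Fin.mk.injEq] at hab
      exact Fin.castLE_injective hk (σ.injective (Fin.ext hab))))

/-- right component of a permutation splitting at `k`. -/
noncomputable def rightPerm {n : ℕ} (σ : Perm (Fin n)) (k : ℕ) (hk : k ≤ n) (h : Splits σ k) :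
    Perm (Fin (n - k)) :=
  Equiv.ofBijective (fun i =>
    (⟨(σ ⟨k + (i : ℕ), by omega⟩ : ℕ) - k, by
        have h1 := h.ge ⟨k + (i : ℕ), by omega⟩ (by simp)
        have h2 := (σ ⟨k + (i : ℕ), by omega⟩).isLt
        omega⟩ : Fin (n - k)))
    (Finite.injective_iff_bijective.mp (by
      intro a b hab
      simp only [Fin.mk.injEq] at hab
      have ha := h.ge ⟨k + (a : ℕ), by omega⟩ (by simp)
      have hb := h.ge ⟨k + (b : ℕ), by omega⟩ (by simp)
      have : σ ⟨k + (a : ℕ), by omega⟩ = σ ⟨k + (b : ℕ), by omega⟩ := Fin.ext (by omega)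
      have := σ.injective this
      simp only [Fin.mk.injEq] at this
      exact Fin.ext (by omega)))

lemma leftPerm_apply {n : ℕ} (σ : Perm (Fin n)) (k : ℕ) (hk : k ≤ n) (h : Splits σ k)
    (i : Fin k) : ((leftPerm σ k hk h i : ℕ)) = σ (Fin.castLE hk i) := rfl

lemma rightPerm_apply {n : ℕ} (σ : Perm (Fin n)) (k : ℕ) (hk : k ≤ n) (h : Splits σ k)
    (i : Fin (n - k)) : ((rightPerm σ k hk h i : ℕ)) = (σ ⟨k + (i : ℕ), by omega⟩ : ℕ) - k := rfl

/-- reconstruction -/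
lemma splits_eq_directSum {n : ℕ} (σ : Perm (Fin n)) (k : ℕ) (hk : k ≤ n) (h : Splits σ k) :
    σ = (finCongr (by omega : k + (n - k) = n)).permCongr
        (directSum (leftPerm σ k hk h) (rightPerm σ k hk h)) := by
  have e : k + (n - k) = n := by omega
  ext x
  simp only [permCongr_apply, finCongr_apply, Fin.coe_cast]
  have hyx : (((finCongr e).symm x : Fin (k + (n-k))) : ℕ) = (x : ℕ) := rfl
  rcases lt_or_ge ((x : ℕ)) k with hlt | hge
  · rw [directSum_apply_lt _ _ _ (by rw [hyx]; exact hlt), leftPerm_apply]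
    congr 1
  · rw [directSum_apply_ge _ _ _ (by rw [hyx]; exact hge), rightPerm_apply]
    have hσx := h.ge x hge
    have hlt2 := (σ x).isLt
    have harg : (σ ⟨k + ((⟨((finCongr e).symm x : ℕ) - k, by omega⟩ : Fin (n - k)) : ℕ), by omega⟩ : ℕ)
        = (σ x : ℕ) := by
      congr 2
      exact Fin.ext (by simp [hyx]; omega)
    omega

/-! ### ℕ-valued application -/

noncomputable def pval {n : ℕ} (σ : Perm (Fin n)) (v : ℕ) : ℕ :=
  if h : v < n then σ ⟨v, h⟩ else v

lemma pval_eq {n : ℕ} (σ : Perm (Fin n)) (v : ℕ) (h : v < n) : pval σ v = σ ⟨v, h⟩ :=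
  dif_pos h

lemma pval_lt {n : ℕ} (σ : Perm (Fin n)) (v : ℕ) (h : v < n) : pval σ v < n := by
  rw [pval_eq σ v h]; exact (σ _).isLt

lemma pval_val {n : ℕ} (σ : Perm (Fin n)) (x : Fin n) : pval σ (x : ℕ) = σ x := by
  rw [pval_eq σ _ x.isLt]

lemma perm_ext_pval {n : ℕ} {σ τ : Perm (Fin n)} (h : ∀ v, v < n → pval σ v = pval τ v) :
    σ = τ := by
  ext x
  have := h (x : ℕ) x.isLt
  rwa [pval_val, pval_val] at this

lemma pval_directSum_lt {k l : ℕ} (σ : Perm (Fin k)) (τ : Perm (Fin l)) (v : ℕ) (hv : v < k) :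
    pval (directSum σ τ) v = pval σ v := by
  rw [pval_eq _ v (by omega), pval_eq _ v hv, directSum_apply_lt _ _ _ (by exact hv)]

lemma pval_directSum_ge {k l : ℕ} (σ : Perm (Fin k)) (τ : Perm (Fin l)) (v : ℕ) (hv1 : k ≤ v)
    (hv2 : v < k + l) : pval (directSum σ τ) v = k + pval τ (v - k) := by
  rw [pval_eq _ v hv2, pval_eq _ _ (by omega), directSum_apply_ge _ _ _ (by exact hv1)]

lemma pval_skewSum_lt {k l : ℕ} (σ : Perm (Fin k)) (τ : Perm (Fin l)) (v : ℕ) (hv : v < k) :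
    pval (skewSum σ τ) v = pval σ v + l := by
  rw [pval_eq _ v (by omega), pval_eq _ v hv, skewSum_apply_lt _ _ _ (by exact hv)]

lemma pval_skewSum_ge {k l : ℕ} (σ : Perm (Fin k)) (τ : Perm (Fin l)) (v : ℕ) (hv1 : k ≤ v)
    (hv2 : v < k + l) : pval (skewSum σ τ) v = pval τ (v - k) := by
  rw [pval_eq _ v hv2, pval_eq _ _ (by omega), skewSum_apply_ge _ _ _ (by exact hv1)]

lemma pval_leftPerm {n : ℕ} (σ : Perm (Fin n)) (k : ℕ) (hk : k ≤ n) (h : Splits σ k) (v : ℕ)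
    (hv : v < k) : pval (leftPerm σ k hk h) v = pval σ v := by
  rw [pval_eq _ v hv, pval_eq _ v (by omega), leftPerm_apply]
  congr 1

lemma pval_rightPerm {n : ℕ} (σ : Perm (Fin n)) (k : ℕ) (hk : k ≤ n) (h : Splits σ k) (v : ℕ)
    (hv : v < n - k) : pval (rightPerm σ k hk h) v = pval σ (k + v) - k := by
  rw [pval_eq _ v hv, pval_eq _ _ (by omega), rightPerm_apply]

lemma pval_permCongr {m m' : ℕ} (e : m = m') (σ : Perm (Fin m)) (v : ℕ) :
    pval ((finCongr e).permCongr σ) v = pval σ v := by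
  subst e
  congr 1

lemma splits_pval {n : ℕ} {σ : Perm (Fin n)} {k : ℕ} (h : Splits σ k) (v : ℕ) (hv : v < k)
    (hvn : v < n) : pval σ v < k := by
  rw [pval_eq _ v hvn]; exact h _ (by exact hv)

lemma splits_pval_ge {n : ℕ} {σ : Perm (Fin n)} {k : ℕ} (h : Splits σ k) (v : ℕ) (hv : k ≤ v)
    (hvn : v < n) : k ≤ pval σ v := by
  rw [pval_eq _ v hvn]; exact h.ge _ (by exact hv)

lemma splits_directSum {k l : ℕ} (σ : Perm (Fin k)) (τ : Perm (Fin l)) :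
    Splits (directSum σ τ) k := by
  intro i hi
  rw [directSum_apply_lt _ _ _ hi]
  exact (σ _).isLt

theorem sep_split {n : ℕ} {π : Perm (Fin n)} (h : Separable π) :
    ∀ k (hk0 : 0 < k) (hkn : k < n) (hs : Splits π k),
    Separable (leftPerm π k hkn.le hs) ∧ Separable (rightPerm π k hkn.le hs) := by
  induction h with
  | single => intro k hk0 hkn _; omega
  | @dsum k' l' σ' τ' hσ' hτ' ihσ' ihτ' =>
    intro k hk0 hkn hs
    rcases lt_trichotomy k k' with hlt | heq | hgt
    · -- k < k' : split σ'
      have hsσ : Splits σ' k := by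
        intro i hi
        have h2 := splits_pval hs (i : ℕ) hi (by omega)
        rw [pval_directSum_lt _ _ _ (by omega), pval_val] at h2
        exact h2
      obtain ⟨hL, hR⟩ := ihσ' k hk0 hlt hsσ
      constructor
      · have heq2 : leftPerm (directSum σ' τ') k hkn.le hs = leftPerm σ' k hlt.le hsσ := by
          apply perm_ext_pval
          intro v hv
          rw [pval_leftPerm _ _ _ _ _ hv, pval_leftPerm _ _ _ _ _ hv,
            pval_directSum_lt _ _ _ (by omega)]
        rw [heq2]; exact hL
      · have e : (k' - k) + l' = k' + l' - k := by omega
        have heq2 : rightPerm (directSum σ' τ') k hkn.le hs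
            = (finCongr e).permCongr (directSum (rightPerm σ' k hlt.le hsσ) τ') := by
          apply perm_ext_pval
          intro v hv
          rw [pval_rightPerm _ _ _ _ _ hv, pval_permCongr]
          rcases lt_or_ge v (k' - k) with hc | hc
          · rw [pval_directSum_lt _ _ _ hc, pval_directSum_lt _ _ _ (by omega),
              pval_rightPerm _ _ _ _ _ hc]
          · rw [pval_directSum_ge _ _ _ (by omega) (by omega),
              pval_directSum_ge _ _ _ hc (by omega),
              show k + v - k' = v - (k' - k) by omega]
            omega
        rw [heq2]
        exact (Separable.dsum hR hτ').congr e
    · -- k = k'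
      subst heq
      constructor
      · have heq2 : leftPerm (directSum σ' τ') k hkn.le hs = σ' := by
          apply perm_ext_pval
          intro v hv
          rw [pval_leftPerm _ _ _ _ _ hv, pval_directSum_lt _ _ _ hv]
        rw [heq2]; exact hσ'
      · have e : l' = k + l' - k := by omega
        have heq2 : rightPerm (directSum σ' τ') k hkn.le hs = (finCongr e).permCongr τ' := by
          apply perm_ext_pval
          intro v hv
          rw [pval_rightPerm _ _ _ _ _ hv, pval_permCongr,
            pval_directSum_ge _ _ _ (by omega) (by omega),
            show k + v - k = v by omega]
          omega
        rw [heq2]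
        exact hτ'.congr e
    · -- k > k' : split τ'
      have hkl : k - k' < l' := by omega
      have hsτ : Splits τ' (k - k') := by
        intro i hi
        have h2 := splits_pval hs (k' + (i : ℕ)) (by omega) (by omega)
        rw [pval_directSum_ge _ _ _ (by omega) (by omega),
          show k' + (i : ℕ) - k' = (i : ℕ) by omega, pval_val] at h2
        omega
      obtain ⟨hL, hR⟩ := ihτ' (k - k') (by omega) hkl hsτ
      constructor
      · have e : k' + (k - k') = k := by omega
        have heq2 : leftPerm (directSum σ' τ') k hkn.le hs
            = (finCongr e).permCongr (directSum σ' (leftPerm τ' (k - k') hkl.le hsτ)) := by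
          apply perm_ext_pval
          intro v hv
          rw [pval_leftPerm _ _ _ _ _ hv, pval_permCongr]
          rcases lt_or_ge v k' with hc | hc
          · rw [pval_directSum_lt _ _ _ hc, pval_directSum_lt _ _ _ hc]
          · rw [pval_directSum_ge _ _ _ hc (by omega),
              pval_directSum_ge _ _ _ hc (by omega),
              pval_leftPerm _ _ _ _ _ (by omega)]
        rw [heq2]
        exact (Separable.dsum hσ' hL).congr e
      · have e : l' - (k - k') = k' + l' - k := by omega
        have heq2 : rightPerm (directSum σ' τ') k hkn.le hs
            = (finCongr e).permCongr (rightPerm τ' (k - k') hkl.le hsτ) := by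
          apply perm_ext_pval
          intro v hv
          rw [pval_rightPerm _ _ _ _ _ hv, pval_permCongr,
            pval_rightPerm _ _ _ _ _ (by omega),
            pval_directSum_ge _ _ _ (by omega) (by omega),
            show k - k' + v = k + v - k' by omega]
          have := splits_pval_ge hsτ (k + v - k') (by omega) (by omega)
          omega
        rw [heq2]
        exact hR.congr e
  | @ssum k' l' σ' τ' hσ' hτ' _ _ =>
    intro k hk0 hkn hs
    exfalso
    have hk'0 : 0 < k' := hσ'.pos
    have hl'0 : 0 < l' := hτ'.pos
    have h0 := splits_pval hs 0 hk0 (by omega)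
    rw [pval_skewSum_lt _ _ _ hk'0] at h0
    have hl'k : l' < k := by omega
    have hm := splits_pval_ge hs (k' + l' - 1) (by omega) (by omega)
    rw [pval_skewSum_ge _ _ _ (by omega) (by omega)] at hm
    have := pval_lt τ' (k' + l' - 1 - k') (by omega)
    omega

/-! ### complement and skew splits -/

lemma splits_of_pval {n : ℕ} {σ : Perm (Fin n)} {k : ℕ}
    (h : ∀ v, v < k → v < n → pval σ v < k) : Splits σ k := by
  intro i hi
  have := h (i : ℕ) hi i.isLt
  rwa [pval_val] at this

def MSplits {n : ℕ} (σ : Perm (Fin n)) (k : ℕ) : Prop :=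
  ∀ i : Fin n, (i : ℕ) < k → n - k ≤ (σ i : ℕ)

/-- complement of a permutation -/
def pcompl {n : ℕ} (σ : Perm (Fin n)) : Perm (Fin n) := σ.trans (Fin.revPerm)

lemma msplits_pval {n : ℕ} {σ : Perm (Fin n)} {k : ℕ} (h : MSplits σ k) (v : ℕ) (hv : v < k)
    (hvn : v < n) : n - k ≤ pval σ v := by
  rw [pval_eq _ v hvn]; exact h _ (by exact hv)

lemma pval_compl {n : ℕ} (σ : Perm (Fin n)) (v : ℕ) (hv : v < n) :
    pval (pcompl σ) v = n - 1 - pval σ v := by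
  rw [pval_eq _ v hv, pval_eq _ v hv]
  simp [pcompl, Fin.rev]
  omega

lemma pcompl_pcompl {n : ℕ} (σ : Perm (Fin n)) : pcompl (pcompl σ) = σ := by
  apply perm_ext_pval
  intro v hv
  have h1 := pval_lt σ v hv
  rw [pval_compl _ v hv, pval_compl _ v hv]
  omega

lemma msplits_iff_splits_compl {n : ℕ} (σ : Perm (Fin n)) (k : ℕ) (hk : k ≤ n) :
    MSplits σ k ↔ Splits (pcompl σ) k := by
  constructor
  · intro h
    apply splits_of_pval
    intro v hv hvn
    have h1 := msplits_pval h v hv hvn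
    have h2 := pval_lt σ v hvn
    rw [pval_compl _ v hvn]
    omega
  · intro h i hi
    have h1 := splits_pval h (i : ℕ) hi i.isLt
    rw [pval_compl _ _ i.isLt, pval_val] at h1
    have h2 := (σ i).isLt
    omega

lemma MSplits.lt {n : ℕ} {σ : Perm (Fin n)} {k : ℕ} (hkn : k ≤ n) (h : MSplits σ k) (i : Fin n)
    (hi : k ≤ (i : ℕ)) : (σ i : ℕ) < n - k := by
  have hs := (msplits_iff_splits_compl σ k hkn).mp h
  have h1 := hs.ge i hi
  have h2 : pval (pcompl σ) (i : ℕ) = n - 1 - pval σ (i : ℕ) := pval_compl σ _ i.isLt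
  rw [pval_val, pval_val] at h2
  have h3 := (σ i).isLt
  omega

lemma compl_directSum {k l : ℕ} (σ : Perm (Fin k)) (τ : Perm (Fin l)) :
    pcompl (directSum σ τ) = skewSum (pcompl σ) (pcompl τ) := by
  apply perm_ext_pval
  intro v hv
  rw [pval_compl _ v hv]
  rcases lt_or_ge v k with hc | hc
  · rw [pval_directSum_lt _ _ _ hc, pval_skewSum_lt _ _ _ hc, pval_compl _ v hc]
    have := pval_lt σ v hc
    omega
  · rw [pval_directSum_ge _ _ _ hc hv, pval_skewSum_ge _ _ _ hc hv,
      pval_compl _ _ (by omega)]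
    have := pval_lt τ (v - k) (by omega)
    omega

lemma compl_skewSum {k l : ℕ} (σ : Perm (Fin k)) (τ : Perm (Fin l)) :
    pcompl (skewSum σ τ) = directSum (pcompl σ) (pcompl τ) := by
  apply perm_ext_pval
  intro v hv
  rw [pval_compl _ v hv]
  rcases lt_or_ge v k with hc | hc
  · rw [pval_skewSum_lt _ _ _ hc, pval_directSum_lt _ _ _ hc, pval_compl _ v hc]
    have := pval_lt σ v hc
    omega
  · rw [pval_skewSum_ge _ _ _ hc hv, pval_directSum_ge _ _ _ hc hv,
      pval_compl _ _ (by omega)]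
    have := pval_lt τ (v - k) (by omega)
    omega

lemma Separable.pcompl {n : ℕ} {σ : Perm (Fin n)} (h : Separable σ) :
    Separable (_root_.pcompl σ) := by
  induction h with
  | single =>
    have : _root_.pcompl (Equiv.refl (Fin 1)) = Equiv.refl (Fin 1) := Subsingleton.elim _ _
    rw [this]; exact Separable.single
  | dsum h1 h2 ih1 ih2 => rw [compl_directSum]; exact Separable.ssum ih1 ih2
  | ssum h1 h2 ih1 ih2 => rw [compl_skewSum]; exact Separable.dsum ih1 ih2

lemma msplits_skewSum {k l : ℕ} (σ : Perm (Fin k)) (τ : Perm (Fin l)) :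
    MSplits (skewSum σ τ) k := by
  intro i hi
  rw [skewSum_apply_lt _ _ _ hi]
  omega

lemma sep_exists_split {n : ℕ} {σ : Perm (Fin n)} (h : Separable σ) :
    n = 1 ∨ (∃ k, 0 < k ∧ k < n ∧ Splits σ k) ∨ (∃ k, 0 < k ∧ k < n ∧ MSplits σ k) := by
  induction h with
  | single => left; rfl
  | @dsum k' l' σ' τ' h1 h2 ih1 ih2 =>
    right; left
    exact ⟨k', h1.pos, by have := h2.pos; omega, splits_directSum σ' τ'⟩
  | @ssum k' l' σ' τ' h1 h2 ih1 ih2 =>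
    right; right
    exact ⟨k', h1.pos, by have := h2.pos; omega, msplits_skewSum σ' τ'⟩

lemma splits_msplits_exclusive {n : ℕ} {σ : Perm (Fin n)} {k m : ℕ}
    (hk0 : 0 < k) (hkn : k < n) (hs : Splits σ k)
    (hm0 : 0 < m) (hmn : m < n) (hms : MSplits σ m) : False := by
  have h1 := splits_pval hs 0 hk0 (by omega)
  have h2 := msplits_pval hms 0 hm0 (by omega)
  have h3 := splits_pval_ge hs (n - 1) (by omega) (by omega)
  have h4 : (σ ⟨n - 1, by omega⟩ : ℕ) < n - m := hms.lt hmn.le _ (by simp; omega)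
  rw [pval_eq _ _ (by omega : n - 1 < n)] at h3
  omega

/-! ### firstBlockLen basics -/

lemma fbl_def {n : ℕ} (σ : Perm (Fin n)) :
    firstBlockLen σ = sInf {j : ℕ | 0 < j ∧ Splits σ j} := rfl

lemma fbl_le {n : ℕ} (σ : Perm (Fin n)) {j : ℕ} (hj : 0 < j) (hs : Splits σ j) :
    firstBlockLen σ ≤ j :=
  Nat.sInf_le ⟨hj, hs⟩

lemma splits_self {n : ℕ} (σ : Perm (Fin n)) : Splits σ n := fun i _ => (σ i).isLt

lemma fbl_le_self {n : ℕ} (σ : Perm (Fin n)) (hn : 0 < n) : firstBlockLen σ ≤ n :=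
  fbl_le σ hn (splits_self σ)

lemma fbl_mem {n : ℕ} (σ : Perm (Fin n)) (hn : 0 < n) :
    0 < firstBlockLen σ ∧ Splits σ (firstBlockLen σ) :=
  Nat.sInf_mem (⟨n, hn, splits_self σ⟩ : Set.Nonempty {j : ℕ | 0 < j ∧ Splits σ j})

lemma fbl_min {n : ℕ} (σ : Perm (Fin n)) {k : ℕ} (hk : k < firstBlockLen σ) :
    ¬(0 < k ∧ Splits σ k) :=
  Nat.notMem_of_lt_sInf hk

/-! ### generic partition counting -/

lemma card_partition {α : Type*} [Finite α] (P : α → Prop) (g : α → ℕ) (s : Finset ℕ)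
    (h : ∀ a, P a → g a ∈ s) :
    Nat.card {a // P a} = ∑ j ∈ s, Nat.card {a // P a ∧ g a = j} := by
  classical
  have e1 : {a // P a} ≃ Σ b : {j // j ∈ s}, {x : {a // P a} // g x.1 = b.1} := by
    refine (Equiv.sigmaFiberEquiv (fun x : {a // P a} => (⟨g x.1, h _ x.2⟩ : {j // j ∈ s}))).symm.trans ?_
    apply Equiv.sigmaCongrRight
    intro b
    apply Equiv.subtypeEquivRight
    intro x
    constructor
    · intro hx; rw [← hx]
    · intro hx; exact Subtype.ext hx
  rw [Nat.card_congr e1]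
  letI : Fintype α := Fintype.ofFinite α
  rw [Nat.card_eq_fintype_card, Fintype.card_sigma]
  rw [← Finset.sum_coe_sort s (fun j => Nat.card {a // P a ∧ g a = j})]
  apply Finset.sum_congr rfl
  intro b _
  rw [← Nat.card_eq_fintype_card]
  exact Nat.card_congr (Equiv.subtypeSubtypeEquivSubtypeInter P (fun a => g a = (b : ℕ)))

/-! ### block decomposition bijection -/

lemma fbl_splits {n j : ℕ} (σ : Perm (Fin n)) (hn : 0 < n) (hf : firstBlockLen σ = j) :
    Splits σ j := hf ▸ (fbl_mem σ hn).2

lemma fbl_leftPerm {n j : ℕ} (σ : Perm (Fin n)) (hj : 0 < j) (hjn : j ≤ n) (hs : Splits σ j)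
    (hf : firstBlockLen σ = j) : firstBlockLen (leftPerm σ j hjn hs) = j := by
  refine le_antisymm (fbl_le_self _ hj) ?_
  by_contra hc
  push_neg at hc
  obtain ⟨h1, h2⟩ := fbl_mem (leftPerm σ j hjn hs) hj
  have h3 : Splits σ (firstBlockLen (leftPerm σ j hjn hs)) := by
    apply splits_of_pval
    intro v hv hvn
    have h4 := fbl_le_self (leftPerm σ j hjn hs) hj
    rw [← pval_leftPerm σ j hjn hs v (by omega)]
    exact splits_pval h2 v hv (by omega)
  have := fbl_le σ h1 h3
  omega

lemma fbl_directSum {n j : ℕ} (hj : 0 < j) (hjn : j < n) (e : j + (n - j) = n)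
    (τ : Perm (Fin j)) (ρ : Perm (Fin (n - j))) (hfτ : firstBlockLen τ = j) :
    firstBlockLen ((finCongr e).permCongr (directSum τ ρ)) = j := by
  refine le_antisymm ?_ ?_
  · apply fbl_le _ hj
    apply splits_of_pval
    intro v hv hvn
    rw [pval_permCongr, pval_directSum_lt _ _ _ hv]
    exact pval_lt τ v hv
  · by_contra hc
    push_neg at hc
    obtain ⟨h1, h2⟩ := fbl_mem ((finCongr e).permCongr (directSum τ ρ)) (by omega)
    have h4 := fbl_le_self ((finCongr e).permCongr (directSum τ ρ)) (by omega)
    have h3 : Splits τ (firstBlockLen ((finCongr e).permCongr (directSum τ ρ))) := by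
      apply splits_of_pval
      intro v hv hvn
      have h5 := splits_pval h2 v hv (by omega)
      rwa [pval_permCongr, pval_directSum_lt _ _ _ (by omega)] at h5
    have := fbl_le τ h1 h3
    omega

lemma leftPerm_directSum {n j : ℕ} (hjn : j ≤ n) (e : j + (n - j) = n) (τ : Perm (Fin j))
    (ρ : Perm (Fin (n - j))) (hs : Splits ((finCongr e).permCongr (directSum τ ρ)) j) :
    leftPerm _ j hjn hs = τ :=
  perm_ext_pval fun v hv => by
    rw [pval_leftPerm _ _ _ _ _ hv, pval_permCongr, pval_directSum_lt _ _ _ hv]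

lemma rightPerm_directSum {n j : ℕ} (hjn : j ≤ n) (e : j + (n - j) = n) (τ : Perm (Fin j))
    (ρ : Perm (Fin (n - j))) (hs : Splits ((finCongr e).permCongr (directSum τ ρ)) j) :
    rightPerm _ j hjn hs = ρ :=
  perm_ext_pval fun v hv => by
    rw [pval_rightPerm _ _ _ _ _ hv, pval_permCongr,
      pval_directSum_ge _ _ _ (by omega) (by omega), show j + v - j = v by omega]
    omega

noncomputable def blockEquiv (n j : ℕ) (hj : 0 < j) (hjn : j < n) :
    {σ : Perm (Fin n) // Separable σ ∧ firstBlockLen σ = j} ≃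
    ({τ : Perm (Fin j) // Separable τ ∧ firstBlockLen τ = j} ×
      {ρ : Perm (Fin (n - j)) // Separable ρ}) where
  toFun s :=
    ⟨⟨leftPerm s.1 j hjn.le (fbl_splits s.1 (by omega) s.2.2),
      (sep_split s.2.1 j hj hjn (fbl_splits s.1 (by omega) s.2.2)).1,
      fbl_leftPerm s.1 hj hjn.le _ s.2.2⟩,
     ⟨rightPerm s.1 j hjn.le (fbl_splits s.1 (by omega) s.2.2),
      (sep_split s.2.1 j hj hjn (fbl_splits s.1 (by omega) s.2.2)).2⟩⟩
  invFun p :=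
    ⟨(finCongr (by omega : j + (n - j) = n)).permCongr (directSum p.1.1 p.2.1),
     (Separable.dsum p.1.2.1 p.2.2).congr _,
     fbl_directSum hj hjn _ p.1.1 p.2.1 p.1.2.2⟩
  left_inv s := Subtype.ext
    (splits_eq_directSum s.1 j hjn.le (fbl_splits s.1 (by omega) s.2.2)).symm
  right_inv p :=
    Prod.ext
      (Subtype.ext (leftPerm_directSum hjn.le (by omega) p.1.1 p.2.1
        (fbl_splits _ (by omega) (fbl_directSum hj hjn (by omega) p.1.1 p.2.1 p.1.2.2))))
      (Subtype.ext (rightPerm_directSum hjn.le (by omega) p.1.1 p.2.1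
        (fbl_splits _ (by omega) (fbl_directSum hj hjn (by omega) p.1.1 p.2.1 p.1.2.2))))

noncomputable def numInd (n : ℕ) : ℕ :=
  Nat.card {σ : Perm (Fin n) // Separable σ ∧ firstBlockLen σ = n}

lemma card_block (n j : ℕ) (hj : 0 < j) (hjn : j < n) :
    Nat.card {σ : Perm (Fin n) // Separable σ ∧ firstBlockLen σ = j}
      = numInd j * numSep (n - j) := by
  rw [Nat.card_congr (blockEquiv n j hj hjn), Nat.card_prod]
  rfl

/-! ### indecomposable vs decomposable: complement bijection -/

lemma fbl_pcompl_lt {n : ℕ} {σ : Perm (Fin n)} (hsep : Separable σ) (hn : 2 ≤ n)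
    (hf : firstBlockLen σ = n) : firstBlockLen (pcompl σ) < n := by
  rcases sep_exists_split hsep with h1 | ⟨k, hk0, hkn, hs⟩ | ⟨k, hk0, hkn, hs⟩
  · omega
  · have := fbl_le σ hk0 hs; omega
  · have h2 := (msplits_iff_splits_compl σ k hkn.le).mp hs
    have := fbl_le (pcompl σ) hk0 h2
    omega

lemma fbl_pcompl_eq {n : ℕ} {σ : Perm (Fin n)} (hsep : Separable σ) (hn : 2 ≤ n)
    (hf : firstBlockLen σ < n) : firstBlockLen (pcompl σ) = n := by
  obtain ⟨h1, h2⟩ := fbl_mem σ (by omega)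
  have hms : MSplits (pcompl σ) (firstBlockLen σ) := by
    rw [msplits_iff_splits_compl _ _ (by omega), pcompl_pcompl]
    exact h2
  have hle := fbl_le_self (pcompl σ) (by omega)
  rcases eq_or_lt_of_le hle with he | hlt
  · exact he
  · exfalso
    obtain ⟨h3, h4⟩ := fbl_mem (pcompl σ) (by omega)
    exact splits_msplits_exclusive h3 hlt h4 h1 hf hms

noncomputable def indEquiv (n : ℕ) (hn : 2 ≤ n) :
    {σ : Perm (Fin n) // Separable σ ∧ firstBlockLen σ = n} ≃
    {σ : Perm (Fin n) // Separable σ ∧ firstBlockLen σ < n} where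
  toFun s := ⟨pcompl s.1, s.2.1.pcompl, fbl_pcompl_lt s.2.1 hn s.2.2⟩
  invFun s := ⟨pcompl s.1, s.2.1.pcompl, fbl_pcompl_eq s.2.1 hn s.2.2⟩
  left_inv s := Subtype.ext (pcompl_pcompl s.1)
  right_inv s := Subtype.ext (pcompl_pcompl s.1)

lemma card_partition2 {α : Type*} [Finite α] (P Q : α → Prop) :
    Nat.card {a // P a} = Nat.card {a // P a ∧ Q a} + Nat.card {a // P a ∧ ¬ Q a} := by
  classical
  rw [← Nat.card_sum]
  apply Nat.card_congr
  exact (Equiv.sumCongr (Equiv.subtypeSubtypeEquivSubtypeInter P Q).symm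
    (Equiv.subtypeSubtypeEquivSubtypeInter P (fun a => ¬ Q a)).symm).trans
    (Equiv.sumCompl _) |>.symm

lemma numSep_split (n : ℕ) (hn : 1 ≤ n) :
    numSep n = numInd n + Nat.card {σ : Perm (Fin n) // Separable σ ∧ firstBlockLen σ < n} := by
  rw [numSep, card_partition2 (fun σ : Perm (Fin n) => Separable σ)
    (fun σ => firstBlockLen σ = n)]
  congr 1
  apply Nat.card_congr
  apply Equiv.subtypeEquivRight
  intro σ
  constructor
  · rintro ⟨h1, h2⟩
    exact ⟨h1, lt_of_le_of_ne (fbl_le_self σ (by omega)) h2⟩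
  · rintro ⟨h1, h2⟩
    exact ⟨h1, by omega⟩

lemma numInd_eq_dec (n : ℕ) (hn : 2 ≤ n) :
    numInd n = Nat.card {σ : Perm (Fin n) // Separable σ ∧ firstBlockLen σ < n} :=
  Nat.card_congr (indEquiv n hn)

lemma numSep_eq_two_numInd (n : ℕ) (hn : 2 ≤ n) : numSep n = 2 * numInd n := by
  have h1 := numSep_split n (by omega)
  rw [← numInd_eq_dec n hn] at h1
  omega

lemma dec_card_eq (n : ℕ) :
    Nat.card {σ : Perm (Fin n) // Separable σ ∧ firstBlockLen σ < n}
      = ∑ j ∈ Finset.Ico 1 n, numInd j * numSep (n - j) := by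
  rw [card_partition (fun σ : Perm (Fin n) => Separable σ ∧ firstBlockLen σ < n)
    (fun σ => firstBlockLen σ) (Finset.Ico 1 n)
    (fun σ hσ => Finset.mem_Ico.mpr ⟨(fbl_mem σ hσ.1.pos).1, hσ.2⟩)]
  apply Finset.sum_congr rfl
  intro j hj
  rw [Finset.mem_Ico] at hj
  rw [← card_block n j (by omega) (by omega)]
  apply Nat.card_congr
  apply Equiv.subtypeEquivRight
  intro σ
  constructor
  · rintro ⟨⟨h1, _⟩, h3⟩; exact ⟨h1, h3⟩
  · rintro ⟨h1, h2⟩; exact ⟨⟨h1, by omega⟩, h2⟩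

lemma numSep_conv (n : ℕ) (hn : 1 ≤ n) :
    numSep n = numInd n + ∑ j ∈ Finset.Ico 1 n, numInd j * numSep (n - j) := by
  rw [numSep_split n hn, dec_card_eq]

lemma exists_sep (n : ℕ) (hn : 1 ≤ n) : ∃ σ : Perm (Fin n), Separable σ := by
  induction n with
  | zero => omega
  | succ m ih =>
    rcases Nat.eq_zero_or_pos m with rfl | hm
    · exact ⟨Equiv.refl (Fin 1), Separable.single⟩
    · obtain ⟨σ, hσ⟩ := ih hm
      exact ⟨(finCongr (by omega : 1 + m = m + 1)).permCongr (directSum (Equiv.refl (Fin 1)) σ),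
        (Separable.dsum Separable.single hσ).congr _⟩

lemma numSep_pos (n : ℕ) (hn : 1 ≤ n) : 0 < numSep n := by
  obtain ⟨σ, hσ⟩ := exists_sep n hn
  rw [numSep, Nat.card_pos_iff]
  exact ⟨⟨⟨σ, hσ⟩⟩, inferInstance⟩

lemma numSep_one : numSep 1 = 1 := by
  haveI h1 : Subsingleton {σ : Equiv.Perm (Fin 1) // Separable σ} :=
    ⟨fun s t => Subtype.ext (Equiv.ext fun x => Subsingleton.elim _ _)⟩
  haveI h2 : Inhabited {σ : Equiv.Perm (Fin 1) // Separable σ} :=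
    ⟨⟨Equiv.refl _, Separable.single⟩⟩
  haveI := Unique.mk' {σ : Equiv.Perm (Fin 1) // Separable σ}
  exact Nat.card_unique

lemma fbl_one (σ : Equiv.Perm (Fin 1)) : firstBlockLen σ = 1 :=
  le_antisymm (fbl_le_self σ one_pos) (fbl_mem σ one_pos).1

lemma numInd_one : numInd 1 = 1 := by
  haveI h1 : Subsingleton {σ : Equiv.Perm (Fin 1) // Separable σ ∧ firstBlockLen σ = 1} :=
    ⟨fun s t => Subtype.ext (Equiv.ext fun x => Subsingleton.elim _ _)⟩
  haveI h2 : Inhabited {σ : Equiv.Perm (Fin 1) // Separable σ ∧ firstBlockLen σ = 1} :=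
    ⟨⟨Equiv.refl _, Separable.single, fbl_one _⟩⟩
  haveI := Unique.mk' {σ : Equiv.Perm (Fin 1) // Separable σ ∧ firstBlockLen σ = 1}
  exact Nat.card_unique

/-! ### the quadratic recurrence -/

lemma numSep_zero : numSep 0 = 0 := by
  haveI : IsEmpty {σ : Equiv.Perm (Fin 0) // Separable σ} :=
    ⟨fun s => by have := s.2.pos; omega⟩
  exact Nat.card_of_isEmpty

lemma numInd_eq_sum (n : ℕ) (hn : 2 ≤ n) :
    numInd n = ∑ j ∈ Finset.Ico 1 n, numInd j * numSep (n - j) := by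
  have h1 := numSep_conv n (by omega)
  have h2 := numSep_eq_two_numInd n hn
  omega

lemma numSep_rec (n : ℕ) (hn : 2 ≤ n) :
    numSep n = numSep (n - 1) + ∑ j ∈ Finset.Ico 1 n, numSep j * numSep (n - j) := by
  have h0 : numSep n = ∑ j ∈ Finset.Ico 1 n, 2 * (numInd j * numSep (n - j)) := by
    rw [← Finset.mul_sum, ← numInd_eq_sum n hn, ← numSep_eq_two_numInd n hn]
  have h1 : ∀ j ∈ Finset.Ico 1 n, 2 * (numInd j * numSep (n - j))
      = numSep j * numSep (n - j) + (if j = 1 then numSep (n - 1) else 0) := by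
    intro j hj
    rw [Finset.mem_Ico] at hj
    rcases eq_or_ne j 1 with rfl | hne
    · rw [if_pos rfl, numInd_one, numSep_one]
      ring
    · rw [if_neg hne, ← mul_assoc, ← numSep_eq_two_numInd j (by omega), add_zero]
  rw [h0, Finset.sum_congr rfl h1, Finset.sum_add_distrib]
  have h2 : ∑ j ∈ Finset.Ico 1 n, (if j = 1 then numSep (n - 1) else 0) = numSep (n - 1) := by
    rw [Finset.sum_ite_eq' (Finset.Ico 1 n) 1 (fun _ => numSep (n - 1))]
    rw [if_pos (Finset.mem_Ico.mpr ⟨le_rfl, by omega⟩)]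
  rw [h2, add_comm]

/-! ### power series and the P-recurrence -/

noncomputable def SQ (n : ℕ) : ℚ := (numSep n : ℚ)

noncomputable def fS : PowerSeries ℚ := PowerSeries.mk SQ

lemma SQ_zero : SQ 0 = 0 := by rw [SQ, numSep_zero]; norm_num

lemma SQ_one : SQ 1 = 1 := by rw [SQ, numSep_one]; norm_num

lemma SQ_rec (n : ℕ) (hn : 2 ≤ n) :
    SQ n = SQ (n - 1) + ∑ j ∈ Finset.Ico 1 n, SQ j * SQ (n - j) := by
  have h := numSep_rec n hn
  rw [SQ, h]
  push_cast
  rfl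

lemma conv_eq (n : ℕ) (hn : 1 ≤ n) :
    ∑ p ∈ Finset.HasAntidiagonal.antidiagonal n, SQ p.1 * SQ p.2
      = ∑ j ∈ Finset.Ico 1 n, SQ j * SQ (n - j) := by
  rw [Finset.Nat.sum_antidiagonal_eq_sum_range_succ_mk]
  rw [Finset.sum_range_succ]
  have hz : SQ n * SQ (n - n) = 0 := by
    rw [Nat.sub_self, SQ_zero, mul_zero]
  rw [hz, add_zero, Finset.range_eq_Ico, Finset.sum_eq_sum_Ico_succ_bot hn]
  rw [SQ_zero, zero_mul, zero_add]

open PowerSeries in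
lemma quad : fS ^ 2 + (X - 1) * fS + X = (0 : PowerSeries ℚ) := by
  apply PowerSeries.ext
  intro n
  simp only [map_add, map_zero]
  rw [pow_two, PowerSeries.coeff_mul, sub_mul, one_mul, map_sub]
  rcases Nat.lt_or_ge n 2 with hn | hn
  · interval_cases n
    · simp [fS, PowerSeries.coeff_mk, SQ_zero]
    · simp [fS, PowerSeries.coeff_mk, SQ_zero, SQ_one,
        Finset.Nat.sum_antidiagonal_eq_sum_range_succ_mk, Finset.sum_range_succ]
  · have h1 : ∑ p ∈ Finset.HasAntidiagonal.antidiagonal n,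
        (PowerSeries.coeff p.1) fS * (PowerSeries.coeff p.2) fS
        = ∑ j ∈ Finset.Ico 1 n, SQ j * SQ (n - j) := by
      simp only [fS, PowerSeries.coeff_mk]
      exact conv_eq n (by omega)
    rw [h1]
    obtain ⟨m, rfl⟩ : ∃ m, n = m + 1 := ⟨n - 1, by omega⟩
    rw [PowerSeries.coeff_succ_X_mul]
    simp only [fS, PowerSeries.coeff_mk, PowerSeries.coeff_X]
    rw [if_neg (by omega)]
    have h2 := SQ_rec (m + 1) hn
    rw [show m + 1 - 1 = m by omega] at h2
    rw [h2]
    ring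

open PowerSeries in
lemma deriv_quad :
    (2 * fS + X - 1) * (PowerSeries.derivative ℚ fS) + fS + 1 = (0 : PowerSeries ℚ) := by
  have h0 : PowerSeries.derivative ℚ (fS ^ 2 + (X - 1) * fS + X) = 0 := by
    rw [quad]; simp
  rw [map_add, map_add, Derivation.leibniz, pow_two, Derivation.leibniz] at h0
  rw [map_sub, PowerSeries.derivative_X] at h0
  simp only [smul_eq_mul, map_one] at h0
  rw [show PowerSeries.derivative ℚ (1 : PowerSeries ℚ) = 0 from Derivation.map_one_eq_zero _] at h0
  linear_combination h0

open PowerSeries in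
lemma key_ode :
    PowerSeries.X ^ 2 * (PowerSeries.derivative ℚ fS) - 6 * (X * (PowerSeries.derivative ℚ fS))
      + (PowerSeries.derivative ℚ fS)
      = 1 + X + X * fS - 3 * fS := by
  linear_combination (2 * fS + X - 1) * deriv_quad + (-4 * (PowerSeries.derivative ℚ fS) - 2) * quad

lemma SQ_prec (n : ℕ) (hn : 2 ≤ n) :
    ((n : ℚ) + 1) * SQ (n + 1) = (6 * n - 3) * SQ n - ((n : ℚ) - 2) * SQ (n - 1) := by
  obtain ⟨m, rfl⟩ : ∃ m, n = m + 2 := ⟨n - 2, by omega⟩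
  have hc := congrArg (PowerSeries.coeff (m + 1 + 1)) key_ode
  rw [map_sub, map_add, map_add, map_add, map_sub] at hc
  rw [show (6 : PowerSeries ℚ) * (PowerSeries.X * (PowerSeries.derivative ℚ fS))
      = PowerSeries.C 6 * (PowerSeries.X * (PowerSeries.derivative ℚ fS)) by
        rw [map_ofNat]] at hc
  rw [show (3 : PowerSeries ℚ) * fS = PowerSeries.C 3 * fS by rw [map_ofNat]] at hc
  rw [PowerSeries.coeff_C_mul, PowerSeries.coeff_C_mul] at hc
  rw [PowerSeries.coeff_succ_X_mul, PowerSeries.coeff_succ_X_mul] at hc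
  rw [PowerSeries.coeff_X_pow_mul' (PowerSeries.derivative ℚ fS) 2 (m + 1 + 1)] at hc
  rw [if_pos (by omega : 2 ≤ m + 1 + 1), show m + 1 + 1 - 2 = m by omega] at hc
  rw [PowerSeries.coeff_derivative, PowerSeries.coeff_derivative,
    PowerSeries.coeff_derivative] at hc
  rw [PowerSeries.coeff_one, PowerSeries.coeff_X] at hc
  rw [if_neg (by omega), if_neg (by omega)] at hc
  simp only [fS, PowerSeries.coeff_mk] at hc
  rw [show m + 2 + 1 = m + 1 + 1 + 1 by omega, show m + 2 - 1 = m + 1 by omega,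
    show m + 2 = m + 1 + 1 by omega]
  push_cast at hc ⊢
  linear_combination hc

/-! ### real sequence and ratio asymptotics -/

noncomputable def SR (n : ℕ) : ℝ := (numSep n : ℝ)

lemma SR_pos {n : ℕ} (hn : 1 ≤ n) : 0 < SR n := by
  rw [SR]; exact_mod_cast numSep_pos n hn

lemma SR_prec (n : ℕ) (hn : 2 ≤ n) :
    ((n : ℝ) + 1) * SR (n + 1) = (6 * n - 3) * SR n - ((n : ℝ) - 2) * SR (n - 1) := by
  have h := SQ_prec n hn
  have h2 := congrArg (fun q : ℚ => (q : ℝ)) h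
  simp only [SQ] at h2
  push_cast at h2
  simp only [SR]
  push_cast
  exact h2

lemma numSep_two : numSep 2 = 2 := by
  rw [numSep_rec 2 (by norm_num)]
  rw [show Finset.Ico 1 2 = {1} by decide]
  simp [numSep_one]

lemma numSep_three : numSep 3 = 6 := by
  rw [numSep_rec 3 (by norm_num)]
  rw [show Finset.Ico 1 3 = {1, 2} by decide]
  simp [numSep_one, numSep_two]

lemma numSep_four : numSep 4 = 22 := by
  rw [numSep_rec 4 (by norm_num)]
  rw [show Finset.Ico 1 4 = {1, 2, 3} by decide]
  simp [numSep_one, numSep_two, numSep_three, Finset.sum_insert]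

lemma numSep_five : numSep 5 = 90 := by
  rw [numSep_rec 5 (by norm_num)]
  rw [show Finset.Ico 1 5 = {1, 2, 3, 4} by decide]
  simp [numSep_one, numSep_two, numSep_three, numSep_four, Finset.sum_insert]

lemma numSep_six : numSep 6 = 394 := by
  rw [numSep_rec 6 (by norm_num)]
  rw [show Finset.Ico 1 6 = {1, 2, 3, 4, 5} by decide]
  simp [numSep_one, numSep_two, numSep_three, numSep_four, numSep_five, Finset.sum_insert]

set_option maxHeartbeats 1000000 in
lemma ratio_bounds (n : ℕ) (hn : 5 ≤ n) :
    (3 + 2*Real.sqrt 2) * ((n : ℝ) - 2) * SR n ≤ (n : ℝ) * SR (n + 1) ∧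
    (n : ℝ) * SR (n + 1) ≤ (3 + 2*Real.sqrt 2) * ((n : ℝ) - 1) * SR n := by
  have hs : Real.sqrt 2 ^ 2 = 2 := Real.sq_sqrt (by norm_num)
  have hs0 : 0 ≤ Real.sqrt 2 := Real.sqrt_nonneg 2
  have hs1 : 1 ≤ Real.sqrt 2 := by nlinarith
  have hs15 : Real.sqrt 2 ≤ 3 / 2 := by nlinarith
  induction n, hn using Nat.le_induction with
  | base =>
    have h5 : SR 5 = 90 := by rw [SR, numSep_five]; norm_num
    have h6 : SR 6 = 394 := by rw [SR, numSep_six]; norm_num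
    rw [show ((5:ℕ):ℝ) = 5 by norm_num, h5, show (5:ℕ) + 1 = 6 from rfl, h6]
    constructor <;> nlinarith
  | succ n hn ih =>
    obtain ⟨h1, h2⟩ := ih
    set s := Real.sqrt 2 with hsdef
    have hn5 : (5:ℝ) ≤ (n:ℝ) := by exact_mod_cast hn
    have ha : 0 < SR n := SR_pos (by omega)
    have hb : 0 < SR (n + 1) := SR_pos (by omega)
    have hc : 0 < SR (n + 2) := SR_pos (by omega)
    have hrec0 := SR_prec (n + 1) (by omega)
    rw [show n + 1 - 1 = n from rfl] at hrec0
    have hrec : ((n:ℝ) + 2) * SR (n + 2) = (6*(n:ℝ) + 3) * SR (n + 1) - ((n:ℝ) - 1) * SR n := by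
      push_cast at hrec0
      rw [show n + 1 + 1 = n + 2 from rfl] at hrec0
      linarith [hrec0]
    -- transfer bounds through the quadratic relation
    have hfactA : (3 - 2*s) * ((3 + 2*s) * ((n:ℝ) - 2) * SR n) = ((n:ℝ) - 2) * SR n := by
      linear_combination (-4*((n:ℝ)-2)*SR n) * hs
    have hfactB : (3 - 2*s) * ((3 + 2*s) * ((n:ℝ) - 1) * SR n) = ((n:ℝ) - 1) * SR n := by
      linear_combination (-4*((n:ℝ)-1)*SR n) * hs
    have h3s : (0:ℝ) ≤ 3 - 2*s := by nlinarith
    have hA : ((n:ℝ) - 2) * SR n ≤ (3 - 2*s) * ((n:ℝ) * SR (n + 1)) := by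
      calc ((n:ℝ) - 2) * SR n = (3 - 2*s) * ((3 + 2*s) * ((n:ℝ) - 2) * SR n) := hfactA.symm
        _ ≤ (3 - 2*s) * ((n:ℝ) * SR (n + 1)) := mul_le_mul_of_nonneg_left h1 h3s
    have hB : (3 - 2*s) * ((n:ℝ) * SR (n + 1)) ≤ ((n:ℝ) - 1) * SR n := by
      calc (3 - 2*s) * ((n:ℝ) * SR (n + 1)) ≤ (3 - 2*s) * ((3 + 2*s) * ((n:ℝ) - 1) * SR n) :=
            mul_le_mul_of_nonneg_left h2 h3s
        _ = ((n:ℝ) - 1) * SR n := hfactB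
    have h25 : (25:ℝ) ≤ (n:ℝ)^2 := by nlinarith
    have hD1s : (0:ℝ) ≤ 2*s*(n:ℝ)^2 + 6*s*(n:ℝ) - 18 - 8*s := by nlinarith
    have hD2s : (0:ℝ) ≤ 2*s*(n:ℝ) - 3 := by nlinarith
    have hD1b : (0:ℝ) ≤ SR (n+1) * (2*s*(n:ℝ)^2 + 6*s*(n:ℝ) - 18 - 8*s) := mul_nonneg hb.le hD1s
    have hD2b : (0:ℝ) ≤ SR (n+1) * (2*s*(n:ℝ) - 3) := mul_nonneg hb.le hD2s
    constructor
    · -- lower bound at n+1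
      have hpos : (0:ℝ) < ((n:ℝ) - 2) * ((n:ℝ) + 2) := by nlinarith
      rw [show ((n:ℕ) + 1 : ℕ) = n + 1 from rfl]
      push_cast
      rw [← mul_le_mul_iff_right₀ hpos]
      have hrec2 := congrArg (fun x => ((n:ℝ) - 2) * (((n:ℝ) + 1) * x)) hrec
      have hmulA := mul_le_mul_of_nonneg_left hA
        (show (0:ℝ) ≤ ((n:ℝ) + 1) * ((n:ℝ) - 1) by nlinarith)
      linarith [hrec2, hmulA, hD1b]
    · -- upper bound at n+1
      have hpos2 : (0:ℝ) < ((n:ℝ) + 2) := by nlinarith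
      push_cast
      rw [← mul_le_mul_iff_right₀ hpos2]
      have hrec3 := congrArg (fun x => ((n:ℝ) + 1) * x) hrec
      have hmulB := mul_le_mul_of_nonneg_left hB
        (show (0:ℝ) ≤ ((n:ℝ) + 1) by nlinarith)
      linarith [hrec3, hmulB, hD2b]

lemma tendsto_ratio :
    Tendsto (fun n : ℕ => SR (n + 1) / SR n) atTop (nhds (3 + 2 * Real.sqrt 2)) := by
  have hlow : Tendsto (fun n : ℕ => (3 + 2 * Real.sqrt 2) * (1 - 2 / (n:ℝ))) atTop
      (nhds (3 + 2 * Real.sqrt 2)) := by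
    have := (tendsto_const_nhds (x := (1:ℝ)) (f := atTop (α := ℕ))).sub
      (tendsto_const_div_atTop_nhds_zero_nat 2)
    have h2 := this.const_mul (3 + 2 * Real.sqrt 2)
    simpa using h2
  have hhigh : Tendsto (fun n : ℕ => (3 + 2 * Real.sqrt 2) * (1 - 1 / (n:ℝ))) atTop
      (nhds (3 + 2 * Real.sqrt 2)) := by
    have := (tendsto_const_nhds (x := (1:ℝ)) (f := atTop (α := ℕ))).sub
      (tendsto_const_div_atTop_nhds_zero_nat 1)
    have h2 := this.const_mul (3 + 2 * Real.sqrt 2)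
    simpa using h2
  apply tendsto_of_tendsto_of_tendsto_of_le_of_le' hlow hhigh
  · filter_upwards [eventually_ge_atTop 5] with n hn
    have ha := SR_pos (show 1 ≤ n by omega)
    have hn0 : (0:ℝ) < (n:ℝ) := by exact_mod_cast (by omega : 0 < n)
    have h := (ratio_bounds n hn).1
    rw [le_div_iff₀ ha, ← mul_le_mul_iff_right₀ hn0]
    calc (n:ℝ) * ((3 + 2 * Real.sqrt 2) * (1 - 2 / (n:ℝ)) * SR n)
        = (3 + 2 * Real.sqrt 2) * ((n:ℝ) * (1 - 2 / (n:ℝ))) * SR n := by ring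
      _ = (3 + 2 * Real.sqrt 2) * ((n:ℝ) - 2) * SR n := by
          rw [mul_one_sub, mul_div_cancel₀ _ hn0.ne']
      _ ≤ (n:ℝ) * SR (n + 1) := h
  · filter_upwards [eventually_ge_atTop 5] with n hn
    have ha := SR_pos (show 1 ≤ n by omega)
    have hn0 : (0:ℝ) < (n:ℝ) := by exact_mod_cast (by omega : 0 < n)
    have h := (ratio_bounds n hn).2
    rw [div_le_iff₀ ha, ← mul_le_mul_iff_right₀ hn0]
    calc (n:ℝ) * SR (n + 1) ≤ (3 + 2 * Real.sqrt 2) * ((n:ℝ) - 1) * SR n := h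
      _ = (3 + 2 * Real.sqrt 2) * ((n:ℝ) * (1 - 1 / (n:ℝ))) * SR n := by
          rw [mul_one_sub, mul_div_cancel₀ _ hn0.ne']
      _ = (n:ℝ) * ((3 + 2 * Real.sqrt 2) * (1 - 1 / (n:ℝ)) * SR n) := by ring

lemma inv_L : (3 + 2 * Real.sqrt 2)⁻¹ = 3 - 2 * Real.sqrt 2 := by
  have hs : Real.sqrt 2 ^ 2 = 2 := Real.sq_sqrt (by norm_num)
  have hmul : (3 + 2 * Real.sqrt 2) * (3 - 2 * Real.sqrt 2) = 1 := by nlinarith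
  exact inv_eq_of_mul_eq_one_right hmul

lemma tendsto_inv_ratio :
    Tendsto (fun n : ℕ => SR n / SR (n + 1)) atTop (nhds (3 - 2 * Real.sqrt 2)) := by
  have hL : (0:ℝ) < 3 + 2 * Real.sqrt 2 := by positivity
  have h := tendsto_ratio.inv₀ hL.ne'
  rw [inv_L] at h
  apply h.congr
  intro n
  rw [inv_div]

lemma tendsto_shift (j : ℕ) :
    Tendsto (fun n : ℕ => SR (n - j) / SR n) atTop (nhds ((3 - 2 * Real.sqrt 2) ^ j)) := by
  induction j with
  | zero =>
    rw [pow_zero]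
    apply Tendsto.congr' _ (tendsto_const_nhds (x := (1:ℝ)))
    filter_upwards [eventually_ge_atTop 1] with n hn
    rw [Nat.sub_zero, div_self (SR_pos hn).ne']
  | succ j ih =>
    have hsub : Tendsto (fun n : ℕ => n - (j + 1)) atTop atTop := tendsto_sub_atTop_nat (j + 1)
    have hcomp := tendsto_inv_ratio.comp hsub
    have hmain := hcomp.mul ih
    rw [show (3 - 2 * Real.sqrt 2) * (3 - 2 * Real.sqrt 2) ^ j
        = (3 - 2 * Real.sqrt 2) ^ (j + 1) by ring] at hmain
    apply Tendsto.congr' _ hmain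
    filter_upwards [eventually_ge_atTop (j + 1)] with n hn
    simp only [Function.comp]
    rw [show n - (j + 1) + 1 = n - j by omega]
    have hb : SR (n - j) ≠ 0 := (SR_pos (by omega)).ne'
    field_simp


/-- Under the uniform measure on separable permutations of `[n]`, conditioned on the first
indecomposable block having length `< n`, the probability that it has length `j` converges
as `n → ∞` to `2(3-2√2)` if `j = 1` and to `s_j (3-2√2)^j` if `j ≥ 2`. -/
theorem firstBlockLen_conditional_limit (j : ℕ) (hj : 1 ≤ j) :
    Filter.Tendsto
      (fun n : ℕ =>
        (Nat.card {σ : Equiv.Perm (Fin n) //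
            Separable σ ∧ firstBlockLen σ = j ∧ firstBlockLen σ < n} : ℝ) /
        (Nat.card {σ : Equiv.Perm (Fin n) // Separable σ ∧ firstBlockLen σ < n} : ℝ))
      Filter.atTop
      (nhds (if j = 1 then 2 * (3 - 2 * Real.sqrt 2)
             else (numSep j : ℝ) * (3 - 2 * Real.sqrt 2) ^ j)) := by
  have hT : (if j = 1 then 2 * (3 - 2 * Real.sqrt 2)
        else (numSep j : ℝ) * (3 - 2 * Real.sqrt 2) ^ j)
      = 2 * (numInd j : ℝ) * (3 - 2 * Real.sqrt 2) ^ j := by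
    rcases eq_or_ne j 1 with rfl | hne
    · rw [if_pos rfl, numInd_one, pow_one]
      norm_num
    · rw [if_neg hne]
      have h2 : numSep j = 2 * numInd j := numSep_eq_two_numInd j (by omega)
      rw [h2]
      push_cast
      ring
  rw [hT]
  have hmain := (tendsto_shift j).const_mul (2 * (numInd j : ℝ))
  apply Tendsto.congr' _ (by simpa [mul_comm] using hmain)
  filter_upwards [eventually_ge_atTop (j + 2)] with n hn
  have hnum : Nat.card {σ : Equiv.Perm (Fin n) //
      Separable σ ∧ firstBlockLen σ = j ∧ firstBlockLen σ < n} = numInd j * numSep (n - j) := by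
    rw [Nat.card_congr (Equiv.subtypeEquivRight (q := fun σ : Equiv.Perm (Fin n) =>
      Separable σ ∧ firstBlockLen σ = j) (fun σ =>
        ⟨fun ⟨a, b, _⟩ => ⟨a, b⟩, fun ⟨a, b⟩ => ⟨a, b, by omega⟩⟩))]
    exact card_block n j (by omega) (by omega)
  have hden : Nat.card {σ : Equiv.Perm (Fin n) // Separable σ ∧ firstBlockLen σ < n}
      = numInd n := (numInd_eq_dec n (by omega)).symm
  rw [hnum, hden]
  have hSn : SR n = 2 * (numInd n : ℝ) := by
    rw [SR]; exact_mod_cast numSep_eq_two_numInd n (by omega)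
  have hpos : (0:ℝ) < SR n := SR_pos (by omega)
  have hni : (0:ℝ) < (numInd n : ℝ) := by rw [hSn] at hpos; linarith
  have hSRnj : SR (n - j) = ((numSep (n - j) : ℕ) : ℝ) := rfl
  rw [hSn, hSRnj]
  push_cast
  field_simp
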